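/- Bisimulation Lemma (X-property): for π-processes P and Q, if P ⟹ P' for some P' with P' = Q, and Q ⟹ Q' for some Q' with Q' = P, then P = Q. -/

import Mathlib

set_option linter.unusedVariables false

/-! Core formalization of the π-calculus with name dichotomy.
Names are natural numbers; name variables are natural numbers (kept disjoint
via the sum-like type `NV`). -/

abbrev Name := ℕ

/-- Names and name variables. -/
inductive NV : Type
  | nm : Name → NV
  | vr : ℕ → NV
  deriving DecidableEq

/-- π-terms.  Input and output choices have a finite index set `Fin k`. -/
inductive Term : Type
  | nil : Term
  | inp : NV → ℕ → (k : ℕ) → (Fin k → Term) → Term          -- Σ_{i∈I} n(x).T_i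
  | out : NV → (k : ℕ) → (Fin k → NV) → (Fin k → Term) → Term -- Σ_{i∈I} n̄ m_i.T_i
  | par : Term → Term → Term
  | res : Name → Term → Term
  | mat : NV → NV → Term → Term
  | mis : NV → NV → Term → Term
  | repInp : NV → ℕ → Term → Term                             -- !n(x).T
  | repOut : NV → NV → Term → Term                            -- !n̄m.T

namespace NV

/-- Apply a map on variables. -/
def sub (σ : ℕ → NV) : NV → NV
  | nm a => nm a
  | vr x => σ x

/-- Apply a map on names. -/
def ren (α : Name → Name) : NV → NV
  | nm a => nm (α a)
  | vr x => vr x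

def vars : NV → Set ℕ
  | nm _ => ∅
  | vr x => {x}

def names : NV → Set Name
  | nm a => {a}
  | vr _ => ∅

end NV

namespace Term

/-- Apply a substitution (a map from name variables to names-or-variables),
    not substituting bound occurrences. -/
def applyVar (σ : ℕ → NV) : Term → Term
  | nil => nil
  | inp n x k Ts => inp (n.sub σ) x k (fun i => (Ts i).applyVar (Function.update σ x (NV.vr x)))
  | out n k ms Ts => out (n.sub σ) k (fun i => (ms i).sub σ) (fun i => (Ts i).applyVar σ)
  | par S T => par (S.applyVar σ) (T.applyVar σ)
  | res c T => res c (T.applyVar σ)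
  | mat p q T => mat (p.sub σ) (q.sub σ) (T.applyVar σ)
  | mis p q T => mis (p.sub σ) (q.sub σ) (T.applyVar σ)
  | repInp n x T => repInp (n.sub σ) x (T.applyVar (Function.update σ x (NV.vr x)))
  | repOut n m T => repOut (n.sub σ) (m.sub σ) (T.applyVar σ)

/-- Substitute the single name `c` for the name variable `x`: `T{c/x}`. -/
def subst1 (x : ℕ) (c : Name) (T : Term) : Term :=
  T.applyVar (fun y => if y = x then NV.nm c else NV.vr y)

/-- Apply an assignment (a total map from name variables to names). -/
def assign (ρ : ℕ → Name) (T : Term) : Term :=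
  T.applyVar (fun x => NV.nm (ρ x))

/-- Apply a renaming to all names of a term. -/
def applyName (α : Name → Name) : Term → Term
  | nil => nil
  | inp n x k Ts => inp (n.ren α) x k (fun i => (Ts i).applyName α)
  | out n k ms Ts => out (n.ren α) k (fun i => (ms i).ren α) (fun i => (Ts i).applyName α)
  | par S T => par (S.applyName α) (T.applyName α)
  | res c T => res (α c) (T.applyName α)
  | mat p q T => mat (p.ren α) (q.ren α) (T.applyName α)
  | mis p q T => mis (p.ren α) (q.ren α) (T.applyName α)
  | repInp n x T => repInp (n.ren α) x (T.applyName α)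
  | repOut n m T => repOut (n.ren α) (m.ren α) (T.applyName α)

/-- Free name variables. -/
def fvar : Term → Set ℕ
  | nil => ∅
  | inp n x k Ts => n.vars ∪ ((⋃ i, (Ts i).fvar) \ {x})
  | out n k ms Ts => n.vars ∪ (⋃ i, (ms i).vars ∪ (Ts i).fvar)
  | par S T => S.fvar ∪ T.fvar
  | res _ T => T.fvar
  | mat p q T => p.vars ∪ q.vars ∪ T.fvar
  | mis p q T => p.vars ∪ q.vars ∪ T.fvar
  | repInp n x T => n.vars ∪ (T.fvar \ {x})
  | repOut n m T => n.vars ∪ m.vars ∪ T.fvar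

/-- Global (non-local) names. -/
def gname : Term → Set Name
  | nil => ∅
  | inp n _ k Ts => n.names ∪ (⋃ i, (Ts i).gname)
  | out n k ms Ts => n.names ∪ (⋃ i, (ms i).names ∪ (Ts i).gname)
  | par S T => S.gname ∪ T.gname
  | res c T => T.gname \ {c}
  | mat p q T => p.names ∪ q.names ∪ T.gname
  | mis p q T => p.names ∪ q.names ∪ T.gname
  | repInp n _ T => n.names ∪ T.gname
  | repOut n m T => n.names ∪ m.names ∪ T.gname

end Term

/-- A π-process is a closed π-term. -/
def Closed (P : Term) : Prop := P.fvar = ∅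

def IsProc (P : Term) : Prop := Closed P

/-- Labels (external actions). -/
inductive Label : Type
  | inp : Name → Name → Label      -- ab
  | out : Name → Name → Label      -- āb
  | bout : Name → Name → Label     -- ā(c)
  deriving DecidableEq

def Label.names : Label → Set Name
  | .inp a b => {a, b}
  | .out a b => {a, b}
  | .bout a c => {a, c}

def Label.ren (α : Name → Name) : Label → Label
  | .inp a b => .inp (α a) (α b)
  | .out a b => .out (α a) (α b)
  | .bout a c => .bout (α a) (α c)

/-- Actions: internal action τ or a label. -/
inductive Act : Type
  | tau : Act
  | lab : Label → Act

def Act.names : Act → Set Name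
  | .tau => ∅
  | .lab ℓ => ℓ.names

def Act.ren (α : Name → Name) : Act → Act
  | .tau => .tau
  | .lab ℓ => .lab (ℓ.ren α)

/-- The labelled transition system of the π-calculus. -/
inductive Step : Term → Act → Term → Prop
  | inp {a : Name} {x : ℕ} {k : ℕ} {Ts : Fin k → Term} (i : Fin k) (c : Name) :
      Step (.inp (.nm a) x k Ts) (.lab (.inp a c)) ((Ts i).subst1 x c)
  | out {a : Name} {k : ℕ} {ms : Fin k → NV} {Ts : Fin k → Term} (i : Fin k) {c : Name}
      (h : ms i = .nm c) :
      Step (.out (.nm a) k ms Ts) (.lab (.out a c)) (Ts i)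
  | parR {S T T' : Term} {μ : Act} :
      Step T μ T' → Step (.par S T) μ (.par S T')
  | parL {S S' T : Term} {μ : Act} :
      Step S μ S' → Step (.par S T) μ (.par S' T)
  | commL {S S' T T' : Term} {a b : Name} :
      Step S (.lab (.inp a b)) S' → Step T (.lab (.out a b)) T' →
      Step (.par S T) .tau (.par S' T')
  | commR {S S' T T' : Term} {a b : Name} :
      Step S (.lab (.out a b)) S' → Step T (.lab (.inp a b)) T' →
      Step (.par S T) .tau (.par S' T')
  | closeL {S S' T T' : Term} {a c : Name} :
      Step S (.lab (.inp a c)) S' → Step T (.lab (.bout a c)) T' →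
      Step (.par S T) .tau (.res c (.par S' T'))
  | closeR {S S' T T' : Term} {a c : Name} :
      Step S (.lab (.bout a c)) S' → Step T (.lab (.inp a c)) T' →
      Step (.par S T) .tau (.res c (.par S' T'))
  | open_ {T T' : Term} {a c : Name} :
      Step T (.lab (.out a c)) T' → Step (.res c T) (.lab (.bout a c)) T'
  | resStep {T T' : Term} {μ : Act} {c : Name} :
      Step T μ T' → c ∉ μ.names → Step (.res c T) μ (.res c T')
  | matStep {T T' : Term} {μ : Act} {a : Name} :
      Step T μ T' → Step (.mat (.nm a) (.nm a) T) μ T'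
  | misStep {T T' : Term} {μ : Act} {a b : Name} :
      a ≠ b → Step T μ T' → Step (.mis (.nm a) (.nm b) T) μ T'
  | repOutStep {a b : Name} {T : Term} :
      Step (.repOut (.nm a) (.nm b) T) (.lab (.out a b)) (.par T (.repOut (.nm a) (.nm b) T))
  | repInpStep {a : Name} {x : ℕ} {T : Term} (b : Name) :
      Step (.repInp (.nm a) x T) (.lab (.inp a b)) (.par (T.subst1 x b) (.repInp (.nm a) x T))

/-- Internal action. -/
def Tau (P Q : Term) : Prop := Step P .tau Q

/-- `P ⟹ Q` : reflexive and transitive closure of τ. -/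
def WeakTau : Term → Term → Prop := Relation.ReflTransGen Tau

/-- `P ⇓` : observability. -/
def Obs (P : Term) : Prop := ∃ P' ℓ P'', WeakTau P P' ∧ Step P' (.lab ℓ) P''

abbrev PRel : Type := Term → Term → Prop

def OnProc (R : PRel) : Prop := ∀ P Q, R P Q → IsProc P ∧ IsProc Q

def ReflProc (R : PRel) : Prop := ∀ P, IsProc P → R P P

def Equipollent (R : PRel) : Prop := ∀ P Q, R P Q → (Obs P ↔ Obs Q)

def Extensional (R : PRel) : Prop :=
  (∀ L M P Q, R L M → R P Q → R (.par L P) (.par M Q)) ∧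
  (∀ P Q c, R P Q → R (.res c P) (.res c Q))

/-- An infinite τ-sequence. -/
def TauSeq (f : ℕ → Term) : Prop := ∀ n, Tau (f n) (f (n + 1))

/-- `P —τ→⟹ P'`. -/
def TauWeak (P P' : Term) : Prop := ∃ P₀, Tau P P₀ ∧ WeakTau P₀ P'

def Codivergent (R : PRel) : Prop := ∀ P Q, R P Q →
  ((∀ f : ℕ → Term, f 0 = Q → TauSeq f →
      ∃ k, 1 ≤ k ∧ ∃ P', TauWeak P P' ∧ R P' (f k)) ∧
   (∀ f : ℕ → Term, f 0 = P → TauSeq f →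
      ∃ k, 1 ≤ k ∧ ∃ Q', TauWeak Q Q' ∧ R Q' (f k)))

/-- Branching-style bisimulation. -/
def Bisim (R : PRel) : Prop := ∀ P Q, R P Q →
  ((∀ Q', Tau Q Q' →
      (∃ P', WeakTau P P' ∧ R P' Q ∧ R P' Q') ∨
      (∃ P'' P', WeakTau P P'' ∧ R P'' Q ∧ Tau P'' P' ∧ R P' Q')) ∧
   (∀ P', Tau P P' →
      (∃ Q', WeakTau Q Q' ∧ R P Q' ∧ R P' Q') ∨
      (∃ Q'' Q', WeakTau Q Q'' ∧ R P Q'' ∧ Tau Q'' Q' ∧ R P' Q')))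

/-- A relation qualifying for the absolute equality. -/
def GoodAbs (R : PRel) : Prop :=
  OnProc R ∧ ReflProc R ∧ Equipollent R ∧ Extensional R ∧ Codivergent R ∧ Bisim R

/-- The absolute equality: the largest reflexive, equipollent, extensional,
codivergent bisimulation on π-processes. -/
def AbsEq (P Q : Term) : Prop := ∃ R : PRel, GoodAbs R ∧ R P Q


/-! ### Auxiliary development for the Bisimulation Lemma -/

namespace XP

open Relation

/-- helper: variables of a substituted name. -/
lemma vars_sub_subset {σ : ℕ → NV} {n : NV} {V : Set ℕ}
    (h : ∀ y ∈ n.vars, (σ y).vars ⊆ V) : (n.sub σ).vars ⊆ V := by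
  cases n with
  | nm a => simp [NV.sub, NV.vars]
  | vr x => exact h x (by simp [NV.vars])

lemma fvar_applyVar : ∀ (T : Term) (σ : ℕ → NV) (V : Set ℕ),
    (∀ y ∈ T.fvar, (σ y).vars ⊆ V) → (T.applyVar σ).fvar ⊆ V := by
  intro T
  induction T with
  | nil => intro σ V h; simp [Term.applyVar, Term.fvar]
  | inp n x k Ts ih =>
      intro σ V h
      simp only [Term.applyVar, Term.fvar]
      apply Set.union_subset
      · exact vars_sub_subset (fun y hy => h y (Set.mem_union_left _ hy))
      · intro z hz
        obtain ⟨hz1, hz2⟩ := hz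
        simp only [Set.mem_iUnion] at hz1
        obtain ⟨i, hi⟩ := hz1
        simp only [Set.mem_singleton_iff] at hz2
        have hsub : ((Ts i).applyVar (Function.update σ x (NV.vr x))).fvar ⊆ V ∪ {x} := by
          apply ih i
          intro y hy
          by_cases hxy : y = x
          · subst hxy
            simp [Function.update_self, NV.vars]
          · rw [Function.update_of_ne hxy]
            refine (h y ?_).trans Set.subset_union_left
            exact Set.mem_union_right _ ⟨Set.mem_iUnion.2 ⟨i, hy⟩, hxy⟩
        rcases hsub hi with hV | hx
        · exact hV
        · exact absurd hx hz2
  | out n k ms Ts ih =>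
      intro σ V h
      simp only [Term.applyVar, Term.fvar]
      apply Set.union_subset
      · exact vars_sub_subset (fun y hy => h y (Set.mem_union_left _ hy))
      · apply Set.iUnion_subset; intro i
        apply Set.union_subset
        · exact vars_sub_subset (fun y hy => h y (Set.mem_union_right _
            (Set.mem_iUnion.2 ⟨i, Set.mem_union_left _ hy⟩)))
        · exact ih i σ V (fun y hy => h y (Set.mem_union_right _
            (Set.mem_iUnion.2 ⟨i, Set.mem_union_right _ hy⟩)))
  | par S T ihS ihT =>
      intro σ V h
      simp only [Term.applyVar, Term.fvar]
      exact Set.union_subset (ihS σ V (fun y hy => h y (Set.mem_union_left _ hy)))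
        (ihT σ V (fun y hy => h y (Set.mem_union_right _ hy)))
  | res c T ih => intro σ V h; exact ih σ V h
  | mat p q T ih =>
      intro σ V h
      simp only [Term.applyVar, Term.fvar]
      refine Set.union_subset (Set.union_subset ?_ ?_) ?_
      · exact vars_sub_subset (fun y hy => h y (Set.mem_union_left _ (Set.mem_union_left _ hy)))
      · exact vars_sub_subset (fun y hy => h y (Set.mem_union_left _ (Set.mem_union_right _ hy)))
      · exact ih σ V (fun y hy => h y (Set.mem_union_right _ hy))
  | mis p q T ih =>
      intro σ V h
      simp only [Term.applyVar, Term.fvar]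
      refine Set.union_subset (Set.union_subset ?_ ?_) ?_
      · exact vars_sub_subset (fun y hy => h y (Set.mem_union_left _ (Set.mem_union_left _ hy)))
      · exact vars_sub_subset (fun y hy => h y (Set.mem_union_left _ (Set.mem_union_right _ hy)))
      · exact ih σ V (fun y hy => h y (Set.mem_union_right _ hy))
  | repInp n x T ih =>
      intro σ V h
      simp only [Term.applyVar, Term.fvar]
      apply Set.union_subset
      · exact vars_sub_subset (fun y hy => h y (Set.mem_union_left _ hy))
      · intro z hz
        obtain ⟨hz1, hz2⟩ := hz
        simp only [Set.mem_singleton_iff] at hz2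
        have hsub : (T.applyVar (Function.update σ x (NV.vr x))).fvar ⊆ V ∪ {x} := by
          apply ih
          intro y hy
          by_cases hxy : y = x
          · subst hxy; simp [Function.update_self, NV.vars]
          · rw [Function.update_of_ne hxy]
            refine (h y ?_).trans Set.subset_union_left
            exact Set.mem_union_right _ ⟨hy, hxy⟩
        rcases hsub hz1 with hV | hx
        · exact hV
        · exact absurd hx hz2
  | repOut n m T ih =>
      intro σ V h
      simp only [Term.applyVar, Term.fvar]
      refine Set.union_subset (Set.union_subset ?_ ?_) ?_
      · exact vars_sub_subset (fun y hy => h y (Set.mem_union_left _ (Set.mem_union_left _ hy)))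
      · exact vars_sub_subset (fun y hy => h y (Set.mem_union_left _ (Set.mem_union_right _ hy)))
      · exact ih σ V (fun y hy => h y (Set.mem_union_right _ hy))

lemma fvar_subst1 {T : Term} {x : ℕ} {c : Name} :
    (T.subst1 x c).fvar ⊆ T.fvar \ {x} := by
  apply fvar_applyVar
  intro y hy
  by_cases h : y = x
  · simp [h, NV.vars]
  · intro z hz
    simp only [h, if_false, NV.vars, Set.mem_singleton_iff] at hz
    subst hz
    exact ⟨hy, h⟩

lemma step_fvar {T : Term} {μ : Act} {T' : Term} (h : Step T μ T') :
    T'.fvar ⊆ T.fvar := by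
  induction h with
  | inp i c =>
      refine fvar_subst1.trans ?_
      intro z hz
      simp only [Term.fvar, NV.vars, Set.empty_union]
      exact ⟨Set.mem_iUnion.2 ⟨i, hz.1⟩, hz.2⟩
  | out i hms =>
      intro z hz
      simp only [Term.fvar]
      exact Set.mem_union_right _ (Set.mem_iUnion.2 ⟨i, Set.mem_union_right _ hz⟩)
  | parR _ ih => exact Set.union_subset_union_right _ ih
  | parL _ ih => exact Set.union_subset_union_left _ ih
  | commL _ _ ih1 ih2 => exact Set.union_subset_union ih1 ih2
  | commR _ _ ih1 ih2 => exact Set.union_subset_union ih1 ih2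
  | closeL _ _ ih1 ih2 => exact Set.union_subset_union ih1 ih2
  | closeR _ _ ih1 ih2 => exact Set.union_subset_union ih1 ih2
  | open_ _ ih => exact ih
  | resStep _ _ ih => exact ih
  | matStep _ ih => exact ih.trans (Set.subset_union_right)
  | misStep _ _ ih => exact ih.trans (Set.subset_union_right)
  | repOutStep =>
      intro z hz
      rcases hz with hz | hz
      · exact Set.mem_union_right _ hz
      · exact hz
  | repInpStep b =>
      intro z hz
      rcases hz with hz | hz
      · exact Set.mem_union_right _ (fvar_subst1 hz)
      · exact hz

lemma step_isProc {T : Term} {μ : Act} {T' : Term} (h : Step T μ T') (hT : IsProc T) :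
    IsProc T' :=
  Set.subset_empty_iff.mp (hT ▸ step_fvar h)

lemma tau_isProc {T T' : Term} (h : Tau T T') (hT : IsProc T) : IsProc T' :=
  step_isProc h hT

lemma weak_isProc {T T' : Term} (h : WeakTau T T') (hT : IsProc T) : IsProc T' := by
  induction h with
  | refl => exact hT
  | tail _ h2 ih => exact tau_isProc h2 ih

lemma tauSeq_isProc {f : ℕ → Term} (hf : TauSeq f) (h0 : IsProc (f 0)) :
    ∀ t, IsProc (f t) := by
  intro t
  induction t with
  | zero => exact h0
  | succ n ih => exact tau_isProc (hf n) ih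

lemma isProc_par {S T : Term} (hS : IsProc S) (hT : IsProc T) : IsProc (Term.par S T) := by
  unfold IsProc Closed at *
  simp [Term.fvar, hS, hT]

lemma isProc_res {T : Term} (c : Name) (hT : IsProc T) : IsProc (Term.res c T) := hT

/-! weak transition utilities -/

lemma weak_parL {S S' : Term} (T : Term) (h : WeakTau S S') :
    WeakTau (Term.par S T) (Term.par S' T) :=
  Relation.ReflTransGen.lift (p := Tau) (fun X => Term.par X T) (fun _ _ hs => Step.parL hs) _ _ h

lemma weak_parR (S : Term) {T T' : Term} (h : WeakTau T T') :
    WeakTau (Term.par S T) (Term.par S T') :=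
  Relation.ReflTransGen.lift (p := Tau) (fun X => Term.par S X) (fun _ _ hs => Step.parR hs) _ _ h

lemma weak_par {S S' T T' : Term} (h1 : WeakTau S S') (h2 : WeakTau T T') :
    WeakTau (Term.par S T) (Term.par S' T') :=
  (weak_parL T h1).trans (weak_parR S' h2)

lemma weak_res (c : Name) {T T' : Term} (h : WeakTau T T') :
    WeakTau (Term.res c T) (Term.res c T') :=
  Relation.ReflTransGen.lift (p := Tau) (fun X => Term.res c X)
    (fun _ _ hs => Step.resStep hs (by simp [Act.names])) _ _ h

lemma weak_obs {X Y : Term} (h : WeakTau X Y) (hY : Obs Y) : Obs X := by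
  obtain ⟨Y', ℓ, Y'', hw, hs⟩ := hY
  exact ⟨Y', ℓ, Y'', h.trans hw, hs⟩

lemma tauweak_to_weak {A B : Term} (h : TauWeak A B) : WeakTau A B := by
  obtain ⟨A0, h1, h2⟩ := h
  exact Relation.ReflTransGen.head h1 h2

lemma weak_tauweak {A A' B : Term} (h1 : WeakTau A A') (h2 : TauWeak A' B) : TauWeak A B := by
  rcases (Relation.reflTransGen_iff_eq_or_transGen.mp h1) with rfl | _
  · exact h2
  · cases h1.cases_head with
    | inl he => exact he ▸ h2
    | inr hex =>
        obtain ⟨A0, ht, hw⟩ := hex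
        exact ⟨A0, ht, hw.trans (tauweak_to_weak h2)⟩

lemma tauweak_weak {A B C : Term} (h1 : TauWeak A B) (h2 : WeakTau B C) : TauWeak A C := by
  obtain ⟨A0, ht, hw⟩ := h1
  exact ⟨A0, ht, hw.trans h2⟩


/-! ### The universal closure relation `S` -/

/-- One step: some good relation (in either orientation). -/
def G : PRel := fun X Y => ∃ R : PRel, GoodAbs R ∧ (R X Y ∨ R Y X)

/-- The reflexive-transitive, symmetric closure of all good relations,
anchored at processes. -/
def S : PRel := fun X Y => IsProc X ∧ Relation.ReflTransGen G X Y

lemma G_onproc {X Y : Term} (h : G X Y) : IsProc X ∧ IsProc Y := by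
  obtain ⟨R, hR, hxy | hyx⟩ := h
  · exact hR.1 X Y hxy
  · exact (hR.1 Y X hyx).symm

lemma G_symm {X Y : Term} (h : G X Y) : G Y X := by
  obtain ⟨R, hR, hxy | hyx⟩ := h
  · exact ⟨R, hR, Or.inr hxy⟩
  · exact ⟨R, hR, Or.inl hyx⟩

lemma G_equip {X Y : Term} (h : G X Y) : Obs X ↔ Obs Y := by
  obtain ⟨R, hR, hxy | hyx⟩ := h
  · exact hR.2.2.1 X Y hxy
  · exact (hR.2.2.1 Y X hyx).symm

lemma G_bisim1 {X Y : Term} (h : G X Y) : ∀ Y', Tau Y Y' →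
    (∃ X₁, WeakTau X X₁ ∧ G X₁ Y ∧ G X₁ Y') ∨
    (∃ X₂ X₁, WeakTau X X₂ ∧ G X₂ Y ∧ Tau X₂ X₁ ∧ G X₁ Y') := by
  intro Y' hY'
  obtain ⟨R, hR, hXY | hYX⟩ := h
  · rcases (hR.2.2.2.2.2 X Y hXY).1 Y' hY' with ⟨X₁, hw, h1, h2⟩ | ⟨X₂, X₁, hw, h1, ht, h2⟩
    · exact Or.inl ⟨X₁, hw, ⟨R, hR, Or.inl h1⟩, ⟨R, hR, Or.inl h2⟩⟩
    · exact Or.inr ⟨X₂, X₁, hw, ⟨R, hR, Or.inl h1⟩, ht, ⟨R, hR, Or.inl h2⟩⟩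
  · rcases (hR.2.2.2.2.2 Y X hYX).2 Y' hY' with ⟨X₁, hw, h1, h2⟩ | ⟨X₂, X₁, hw, h1, ht, h2⟩
    · exact Or.inl ⟨X₁, hw, ⟨R, hR, Or.inr h1⟩, ⟨R, hR, Or.inr h2⟩⟩
    · exact Or.inr ⟨X₂, X₁, hw, ⟨R, hR, Or.inr h1⟩, ht, ⟨R, hR, Or.inr h2⟩⟩

lemma G_codiv1 {X Y : Term} (h : G X Y) (f : ℕ → Term) (hf0 : f 0 = Y) (hfs : TauSeq f) :
    ∃ k, 1 ≤ k ∧ ∃ X', TauWeak X X' ∧ G X' (f k) := by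
  obtain ⟨R, hR, hxy | hyx⟩ := h
  · obtain ⟨k, hk, X', tw, hr⟩ := (hR.2.2.2.2.1 X Y hxy).1 f hf0 hfs
    exact ⟨k, hk, X', tw, ⟨R, hR, Or.inl hr⟩⟩
  · obtain ⟨k, hk, X', tw, hr⟩ := (hR.2.2.2.2.1 Y X hyx).2 f hf0 hfs
    exact ⟨k, hk, X', tw, ⟨R, hR, Or.inl hr⟩⟩

lemma G_W1 : ∀ {Y Y' : Term}, WeakTau Y Y' → ∀ {X : Term}, G X Y →
    ∃ X', WeakTau X X' ∧ G X' Y' := by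
  intro Y Y' h
  induction h using Relation.ReflTransGen.head_induction_on with
  | refl => exact fun hX => ⟨_, .refl, hX⟩
  | head ht hw ih =>
      intro X hX
      rcases G_bisim1 hX _ ht with ⟨X₁, hw1, _, h2⟩ | ⟨X₂, X₁, hw1, _, ht1, h2⟩
      · obtain ⟨X', hw', hG⟩ := ih h2
        exact ⟨X', hw1.trans hw', hG⟩
      · obtain ⟨X', hw', hG⟩ := ih h2
        exact ⟨X', (hw1.tail ht1).trans hw', hG⟩

lemma S_isProc {X Y : Term} (h : S X Y) : IsProc X ∧ IsProc Y := by
  obtain ⟨hX, hchain⟩ := h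
  refine ⟨hX, ?_⟩
  induction hchain with
  | refl => exact hX
  | tail _ hstep ih => exact (G_onproc hstep).2

lemma S_refl {X : Term} (h : IsProc X) : S X X := ⟨h, .refl⟩

lemma rtg_G_symm : ∀ {X Y : Term}, Relation.ReflTransGen G X Y → Relation.ReflTransGen G Y X := by
  intro X Y h
  induction h with
  | refl => exact .refl
  | tail _ hstep ih => exact Relation.ReflTransGen.head (G_symm hstep) ih

lemma S_symm {X Y : Term} (h : S X Y) : S Y X :=
  ⟨(S_isProc h).2, rtg_G_symm h.2⟩

lemma S_transG {X Y Z : Term} (h : G X Y) (hS : S Y Z) : S X Z :=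
  ⟨(G_onproc h).1, Relation.ReflTransGen.head h hS.2⟩

lemma rtg_G_equip : ∀ {X Y : Term}, Relation.ReflTransGen G X Y → (Obs X ↔ Obs Y) := by
  intro X Y h
  induction h with
  | refl => exact Iff.rfl
  | tail _ hstep ih => exact ih.trans (G_equip hstep)

lemma S_equip {X Y : Term} (h : S X Y) : Obs X ↔ Obs Y := rtg_G_equip h.2

lemma G_par_right {P X Y : Term} (hP : IsProc P) (h : G X Y) :
    G (Term.par X P) (Term.par Y P) := by
  obtain ⟨R, hR, hxy | hyx⟩ := h
  · exact ⟨R, hR, Or.inl (hR.2.2.2.1.1 X Y P P hxy (hR.2.1 P hP))⟩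
  · exact ⟨R, hR, Or.inr (hR.2.2.2.1.1 Y X P P hyx (hR.2.1 P hP))⟩

lemma G_par_left {M X Y : Term} (hM : IsProc M) (h : G X Y) :
    G (Term.par M X) (Term.par M Y) := by
  obtain ⟨R, hR, hxy | hyx⟩ := h
  · exact ⟨R, hR, Or.inl (hR.2.2.2.1.1 M M X Y (hR.2.1 M hM) hxy)⟩
  · exact ⟨R, hR, Or.inr (hR.2.2.2.1.1 M M Y X (hR.2.1 M hM) hyx)⟩

lemma G_res {c : Name} {X Y : Term} (h : G X Y) :
    G (Term.res c X) (Term.res c Y) := by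
  obtain ⟨R, hR, hxy | hyx⟩ := h
  · exact ⟨R, hR, Or.inl (hR.2.2.2.1.2 X Y c hxy)⟩
  · exact ⟨R, hR, Or.inr (hR.2.2.2.1.2 Y X c hyx)⟩

lemma S_ext_par {L M P Q : Term} (h1 : S L M) (h2 : S P Q) :
    S (Term.par L P) (Term.par M Q) := by
  refine ⟨isProc_par h1.1 h2.1, ?_⟩
  have c1 : Relation.ReflTransGen G (Term.par L P) (Term.par M P) :=
    Relation.ReflTransGen.lift (fun X => Term.par X P)
      (fun a b hab => G_par_right h2.1 hab) _ _ h1.2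
  have c2 : Relation.ReflTransGen G (Term.par M P) (Term.par M Q) :=
    Relation.ReflTransGen.lift (fun X => Term.par M X)
      (fun a b hab => G_par_left (S_isProc h1).2 hab) _ _ h2.2
  exact c1.trans c2

lemma S_ext_res (c : Name) {P Q : Term} (h : S P Q) :
    S (Term.res c P) (Term.res c Q) :=
  ⟨isProc_res c h.1,
    Relation.ReflTransGen.lift (fun X => Term.res c X) (fun a b hab => G_res hab) _ _ h.2⟩

/-! ### Bisimulation property of `S` -/

lemma S_bisim1 {A C : Term} (hS : S A C) : ∀ C', Tau C C' →
    (∃ A₁, WeakTau A A₁ ∧ S A₁ C ∧ S A₁ C') ∨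
    (∃ A₂ A₁, WeakTau A A₂ ∧ S A₂ C ∧ Tau A₂ A₁ ∧ S A₁ C') := by
  obtain ⟨hA, hchain⟩ := hS
  revert hA
  induction hchain using Relation.ReflTransGen.head_induction_on with
  | refl =>
      intro hC C' hC'
      exact Or.inr ⟨C, C', .refl, ⟨hC, .refl⟩, hC', ⟨tau_isProc hC' hC, .refl⟩⟩
  | head hAB hBC ih =>
      intro hA C' hC'
      have hB := (G_onproc hAB).2
      rcases ih hB C' hC' with ⟨B₁, hw, h1, h2⟩ | ⟨B₂, B₁, hw, h1, ht, h2⟩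
      · obtain ⟨A₁, hwA, hG⟩ := G_W1 hw hAB
        exact Or.inl ⟨A₁, hwA, S_transG hG h1, S_transG hG h2⟩
      · obtain ⟨A₂, hwA, hG2⟩ := G_W1 hw hAB
        rcases G_bisim1 hG2 B₁ ht with ⟨A₃, hw3, hg31, hg32⟩ | ⟨A₄, A₃, hw4, hg41, ht4, hg31⟩
        · exact Or.inl ⟨A₃, hwA.trans hw3, S_transG hg31 h1, S_transG hg32 h2⟩
        · exact Or.inr ⟨A₄, A₃, hwA.trans hw4, S_transG hg41 h1, ht4, S_transG hg31 h2⟩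

lemma S_bisim : Bisim S := by
  intro P Q hPQ
  constructor
  · exact fun Q' h => S_bisim1 hPQ Q' h
  · intro P' hP'
    rcases S_bisim1 (S_symm hPQ) P' hP' with ⟨Q₁, hw, h1, h2⟩ | ⟨Q₂, Q₁, hw, h1, ht, h2⟩
    · exact Or.inl ⟨Q₁, hw, S_symm h1, S_symm h2⟩
    · exact Or.inr ⟨Q₂, Q₁, hw, S_symm h1, ht, S_symm h2⟩

/-! ### Finite τ-paths -/

lemma weak_path {X Y : Term} (h : WeakTau X Y) :
    ∃ (m : ℕ) (p : ℕ → Term), p 0 = X ∧ p m = Y ∧ ∀ i < m, Tau (p i) (p (i + 1)) := by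
  induction h with
  | refl => exact ⟨0, fun _ => X, rfl, rfl, fun i hi => absurd hi (Nat.not_lt_zero i)⟩
  | tail hab hbc ih =>
      rename_i Zb Zc
      obtain ⟨m, p, h0, hm, hst⟩ := ih
      refine ⟨m + 1, fun i => if i = m + 1 then Zc else p i, by simp [h0], by simp, ?_⟩
      intro i hi
      by_cases him : i = m
      · subst him
        simp only [Nat.succ_ne_succ, if_neg (by omega : ¬ i = i + 1), if_pos rfl]
        rw [hm]
        exact hbc
      · have h1 : ¬ i = m + 1 := by omega
        have h2 : ¬ i + 1 = m + 1 := by omega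
        simp only [if_neg h1, if_neg h2]
        exact hst i (by omega)

lemma tauweak_path {X Y : Term} (h : TauWeak X Y) :
    ∃ (m : ℕ) (p : ℕ → Term), 0 < m ∧ p 0 = X ∧ p m = Y ∧ ∀ i < m, Tau (p i) (p (i + 1)) := by
  obtain ⟨X₀, ht, hw⟩ := h
  obtain ⟨m, q, h0, hm, hst⟩ := weak_path hw
  refine ⟨m + 1, fun i => Nat.rec X (fun j _ => q j) i, Nat.succ_pos m, rfl, hm, ?_⟩
  intro i hi
  cases i with
  | zero =>
      show Tau X (q 0)
      rw [h0]
      exact ht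
  | succ j => exact hst j (by omega)

lemma path_weak {p : ℕ → Term} {m : ℕ} (hstep : ∀ i < m, Tau (p i) (p (i + 1))) :
    ∀ d i, i + d ≤ m → WeakTau (p i) (p (i + d)) := by
  intro d
  induction d with
  | zero => exact fun i _ => .refl
  | succ n ih =>
      intro i h
      have h1 : i + n ≤ m := by omega
      have h2 : Tau (p (i + n)) (p (i + n + 1)) := hstep (i + n) (by omega)
      exact (ih i h1).tail h2

lemma path_weak_end {p : ℕ → Term} {m : ℕ} (hstep : ∀ i < m, Tau (p i) (p (i + 1)))
    {i : ℕ} (hi : i ≤ m) : WeakTau (p i) (p m) := by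
  have := path_weak hstep (m - i) i (by omega)
  rwa [show i + (m - i) = m by omega] at this

/-! ### Codivergence of `S` -/

lemma S_codiv_aux {A C : Term} (hchain : Relation.ReflTransGen G A C) :
    IsProc A → ∀ f : ℕ → Term, TauSeq f → f 0 = C →
    ∃ g : ℕ → Term, TauSeq g ∧ g 0 = A ∧
      ∀ t, ∃ e k, WeakTau (g t) e ∧ 1 ≤ k ∧ S e (f k) := by
  induction hchain using Relation.ReflTransGen.head_induction_on with
  | refl =>
      intro hC f hfs hf0
      have hft : ∀ t, IsProc (f t) := tauSeq_isProc hfs (by rw [hf0]; exact hC)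
      refine ⟨f, hfs, hf0, fun t => ?_⟩
      rcases Nat.eq_zero_or_pos t with rfl | ht
      · exact ⟨f 1, 1, Relation.ReflTransGen.single (hfs 0), le_refl 1, ⟨hft 1, .refl⟩⟩
      · exact ⟨f t, t, .refl, ht, ⟨hft t, .refl⟩⟩
  | head hAB hBC ih =>
      rename_i A₀ B₀
      intro hA f hfs hf0
      obtain ⟨g', hg's, hg'0, hmark⟩ := ih (G_onproc hAB).2 f hfs hf0
      -- Skolem step function for the codivergence of `G` along `g'`
      have step : ∀ q : Term × ℕ, ∃ q' : Term × ℕ,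
          G q.1 (g' q.2) → TauWeak q.1 q'.1 ∧ G q'.1 (g' q'.2) := by
        intro q
        by_cases hq : G q.1 (g' q.2)
        · have hshift : TauSeq (fun m => g' (q.2 + m)) := fun m => hg's (q.2 + m)
          obtain ⟨k, hk, X', htw, hG⟩ := G_codiv1 hq (fun m => g' (q.2 + m)) rfl hshift
          exact ⟨(X', q.2 + k), fun _ => ⟨htw, hG⟩⟩
        · exact ⟨q, fun hc => absurd hc hq⟩
      choose nxt hnxt using step
      have hiter : ∀ n, nxt^[n + 1] (A₀, 0) = nxt (nxt^[n] (A₀, 0)) :=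
        fun n => Function.iterate_succ_apply' nxt n (A₀, 0)
      have hGsq : ∀ n, G (nxt^[n] (A₀, 0)).1 (g' (nxt^[n] (A₀, 0)).2) := by
        intro n
        induction n with
        | zero =>
            show G A₀ (g' 0)
            rw [hg'0]
            exact hAB
        | succ n ihn =>
            rw [hiter n]
            exact (hnxt _ ihn).2
      have hTW : ∀ n, TauWeak (nxt^[n] (A₀, 0)).1 (nxt^[n + 1] (A₀, 0)).1 := by
        intro n
        rw [hiter n]
        exact (hnxt _ (hGsq n)).1
      -- extract finite paths for the segments
      have hpaths : ∀ n, ∃ mp : ℕ × (ℕ → Term), 0 < mp.1 ∧ mp.2 0 = (nxt^[n] (A₀, 0)).1 ∧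
          mp.2 mp.1 = (nxt^[n + 1] (A₀, 0)).1 ∧ ∀ i < mp.1, Tau (mp.2 i) (mp.2 (i + 1)) := by
        intro n
        obtain ⟨m, p, hm, h0, hmm, hst⟩ := tauweak_path (hTW n)
        exact ⟨(m, p), hm, h0, hmm, hst⟩
      choose pa hpa using hpaths
      -- the index machine for the concatenation
      obtain ⟨nek, hneks⟩ : ∃ nek : ℕ × ℕ → ℕ × ℕ, ∀ q : ℕ × ℕ,
          nek q = if q.2 + 1 < (pa q.1).1 then (q.1, q.2 + 1) else (q.1 + 1, 0) :=
        ⟨fun q => if q.2 + 1 < (pa q.1).1 then (q.1, q.2 + 1) else (q.1 + 1, 0), fun q => rfl⟩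
      have hnit : ∀ t, nek^[t + 1] ((0 : ℕ), (0 : ℕ)) = nek (nek^[t] ((0 : ℕ), (0 : ℕ))) :=
        fun t => Function.iterate_succ_apply' nek t (0, 0)
      have hstep : ∀ t, nek^[t + 1] ((0 : ℕ), (0 : ℕ))
          = if (nek^[t] ((0 : ℕ), (0 : ℕ))).2 + 1 < (pa (nek^[t] ((0 : ℕ), (0 : ℕ))).1).1
            then ((nek^[t] ((0 : ℕ), (0 : ℕ))).1, (nek^[t] ((0 : ℕ), (0 : ℕ))).2 + 1)
            else ((nek^[t] ((0 : ℕ), (0 : ℕ))).1 + 1, 0) := by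
        intro t
        rw [hnit t, hneks]
      have hinv : ∀ t, (nek^[t] ((0 : ℕ), (0 : ℕ))).2 < (pa (nek^[t] ((0 : ℕ), (0 : ℕ))).1).1 := by
        intro t
        induction t with
        | zero => exact (hpa 0).1
        | succ t iht =>
            rw [hstep t]
            by_cases hc : (nek^[t] ((0 : ℕ), (0 : ℕ))).2 + 1 < (pa (nek^[t] ((0 : ℕ), (0 : ℕ))).1).1
            · rw [if_pos hc]
              exact hc
            · rw [if_neg hc]
              exact (hpa _).1
      refine ⟨fun t => (pa (nek^[t] ((0 : ℕ), (0 : ℕ))).1).2 (nek^[t] ((0 : ℕ), (0 : ℕ))).2,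
        ?_, ?_, ?_⟩
      · -- TauSeq
        intro t
        show Tau ((pa (nek^[t] ((0 : ℕ), (0 : ℕ))).1).2 (nek^[t] ((0 : ℕ), (0 : ℕ))).2)
          ((pa (nek^[t + 1] ((0 : ℕ), (0 : ℕ))).1).2 (nek^[t + 1] ((0 : ℕ), (0 : ℕ))).2)
        by_cases hc : (nek^[t] ((0 : ℕ), (0 : ℕ))).2 + 1 < (pa (nek^[t] ((0 : ℕ), (0 : ℕ))).1).1
        · rw [hstep t, if_pos hc]
          exact (hpa _).2.2.2 _ (hinv t)
        · rw [hstep t, if_neg hc]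
          show Tau ((pa (nek^[t] ((0 : ℕ), (0 : ℕ))).1).2 (nek^[t] ((0 : ℕ), (0 : ℕ))).2)
            ((pa ((nek^[t] ((0 : ℕ), (0 : ℕ))).1 + 1)).2 0)
          have hmi : (nek^[t] ((0 : ℕ), (0 : ℕ))).2 + 1 = (pa (nek^[t] ((0 : ℕ), (0 : ℕ))).1).1 := by
            have := hinv t
            omega
          have he : (pa ((nek^[t] ((0 : ℕ), (0 : ℕ))).1 + 1)).2 0
              = (pa (nek^[t] ((0 : ℕ), (0 : ℕ))).1).2 ((nek^[t] ((0 : ℕ), (0 : ℕ))).2 + 1) := by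
            rw [(hpa ((nek^[t] ((0 : ℕ), (0 : ℕ))).1 + 1)).2.1, hmi]
            exact ((hpa (nek^[t] ((0 : ℕ), (0 : ℕ))).1).2.2.1).symm
          rw [he]
          exact (hpa _).2.2.2 _ (hinv t)
      · -- starts at A₀
        show (pa 0).2 0 = A₀
        rw [(hpa 0).2.1]
        rfl
      · -- markers
        intro t
        have h1 : WeakTau ((pa (nek^[t] ((0 : ℕ), (0 : ℕ))).1).2 (nek^[t] ((0 : ℕ), (0 : ℕ))).2)
            ((pa (nek^[t] ((0 : ℕ), (0 : ℕ))).1).2 ((pa (nek^[t] ((0 : ℕ), (0 : ℕ))).1).1)) :=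
          path_weak_end ((hpa _).2.2.2) (le_of_lt (hinv t))
        rw [(hpa (nek^[t] ((0 : ℕ), (0 : ℕ))).1).2.2.1] at h1
        obtain ⟨e, k, hwe, hk, hSe⟩ :=
          hmark ((nxt^[(nek^[t] ((0 : ℕ), (0 : ℕ))).1 + 1] (A₀, 0)).2)
        obtain ⟨e', hwe', hGe'⟩ := G_W1 hwe (hGsq ((nek^[t] ((0 : ℕ), (0 : ℕ))).1 + 1))
        exact ⟨e', k, h1.trans hwe', hk, S_transG hGe' hSe⟩

lemma S_codiv1 {A C : Term} (h : S A C) :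
    ∀ f : ℕ → Term, f 0 = C → TauSeq f →
    ∃ k, 1 ≤ k ∧ ∃ A', TauWeak A A' ∧ S A' (f k) := by
  intro f hf0 hfs
  obtain ⟨g, hgs, hg0, hmark⟩ := S_codiv_aux h.2 h.1 f hfs hf0
  obtain ⟨e, k, hwe, hk, hSe⟩ := hmark 1
  exact ⟨k, hk, e, ⟨g 1, by rw [← hg0]; exact hgs 0, hwe⟩, hSe⟩

/-! ### The X-relation -/

def XR : PRel := fun A B => IsProc A ∧ IsProc B ∧
  (∃ A', WeakTau A A' ∧ S A' B) ∧ (∃ B', WeakTau B B' ∧ S B' A)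

lemma S_XR {X Y : Term} (h : S X Y) : XR X Y :=
  ⟨(S_isProc h).1, (S_isProc h).2, ⟨X, .refl, h⟩, ⟨Y, .refl, S_symm h⟩⟩

lemma absEq_S {X Y : Term} (h : AbsEq X Y) : S X Y := by
  obtain ⟨R, hR, hXY⟩ := h
  exact ⟨(hR.1 X Y hXY).1, Relation.ReflTransGen.single ⟨R, hR, Or.inl hXY⟩⟩

lemma XR_good : GoodAbs XR := by
  refine ⟨?_, ?_, ?_, ⟨?_, ?_⟩, ?_, ?_⟩
  · exact fun P Q h => ⟨h.1, h.2.1⟩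
  · exact fun P hP => ⟨hP, hP, ⟨P, .refl, S_refl hP⟩, ⟨P, .refl, S_refl hP⟩⟩
  · rintro P Q ⟨hP, hQ, ⟨P', wP, hSP⟩, ⟨Q', wQ, hSQ⟩⟩
    constructor
    · intro h
      exact weak_obs wQ ((S_equip hSQ).mpr h)
    · intro h
      exact weak_obs wP ((S_equip hSP).mpr h)
  · rintro L M P Q ⟨hL, hM, ⟨L', wL, hSL⟩, ⟨M', wM, hSM⟩⟩ ⟨hP, hQ, ⟨P', wP, hSP⟩, ⟨Q', wQ, hSQ⟩⟩
    exact ⟨isProc_par hL hP, isProc_par hM hQ,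
      ⟨Term.par L' P', weak_par wL wP, S_ext_par hSL hSP⟩,
      ⟨Term.par M' Q', weak_par wM wQ, S_ext_par hSM hSQ⟩⟩
  · rintro P Q c ⟨hP, hQ, ⟨P', wP, hSP⟩, ⟨Q', wQ, hSQ⟩⟩
    exact ⟨isProc_res c hP, isProc_res c hQ,
      ⟨Term.res c P', weak_res c wP, S_ext_res c hSP⟩,
      ⟨Term.res c Q', weak_res c wQ, S_ext_res c hSQ⟩⟩
  · rintro P Q ⟨hP, hQ, ⟨P', wP, hSP⟩, ⟨Q', wQ, hSQ⟩⟩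
    constructor
    · intro f hf0 hfs
      obtain ⟨k, hk, P₁, tw, hS⟩ := S_codiv1 hSP f hf0 hfs
      exact ⟨k, hk, P₁, weak_tauweak wP tw, S_XR hS⟩
    · intro f hf0 hfs
      obtain ⟨k, hk, Q₁, tw, hS⟩ := S_codiv1 hSQ f hf0 hfs
      exact ⟨k, hk, Q₁, weak_tauweak wQ tw, S_XR hS⟩
  · rintro P Q ⟨hP, hQ, ⟨P', wP, hSP⟩, ⟨Q', wQ, hSQ⟩⟩
    constructor
    · intro Q₀ htQ
      rcases S_bisim1 hSP Q₀ htQ with ⟨P₁, hw, h1, h2⟩ | ⟨P₂, P₁, hw, h1, ht, h2⟩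
      · exact Or.inl ⟨P₁, wP.trans hw, S_XR h1, S_XR h2⟩
      · exact Or.inr ⟨P₂, P₁, wP.trans hw, S_XR h1, ht, S_XR h2⟩
    · intro P₀ htP
      rcases S_bisim1 hSQ P₀ htP with ⟨Q₁, hw, h1, h2⟩ | ⟨Q₂, Q₁, hw, h1, ht, h2⟩
      · exact Or.inl ⟨Q₁, wQ.trans hw, S_XR (S_symm h1), S_XR (S_symm h2)⟩
      · exact Or.inr ⟨Q₂, Q₁, wQ.trans hw, S_XR (S_symm h1), ht, S_XR (S_symm h2)⟩

end XP

/-- the Bisimulation Lemma (X-property) for the absolute equality. -/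
theorem bisimulation_lemma (P Q : Term) (hP : IsProc P) (hQ : IsProc Q)
    (h1 : ∃ P', WeakTau P P' ∧ AbsEq P' Q)
    (h2 : ∃ Q', WeakTau Q Q' ∧ AbsEq Q' P) :
    AbsEq P Q := by
  obtain ⟨P', wP, hPQ⟩ := h1
  obtain ⟨Q', wQ, hQP⟩ := h2
  exact ⟨XP.XR, XP.XR_good, hP, hQ, ⟨P', wP, XP.absEq_S hPQ⟩, ⟨Q', wQ, XP.absEq_S hQP⟩⟩
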